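/- Let A be a Dedekind domain, Y a finitely generated projective A-module, and 0 ≠ x ∈ Y. Then there exists a unique minimal nonzero ideal 𝔠 of A (the conductor of x with respect to Y) such that x ∈ 𝔠Y; equivalently, the set of nonzero ideals 𝔫 with x ∈ 𝔫Y has a unique minimal element with respect to inclusion, and it equals the intersection of all such ideals. -/
import Mathlib

theorem mem_smul_top_iff_conductor
    {A : Type*} [CommRing A]
    {Y : Type*} [AddCommGroup Y] [Module A Y] [Module.Projective A Y]
    (x : Y) (I : Ideal A) :
    x ∈ I • (⊤ : Submodule A Y) ↔
      Ideal.span {a | ∃ f : Y →ₗ[A] A, f x = a} ≤ I := by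
  constructor
  · intro hx
    rw [Ideal.span_le]
    rintro a ⟨f, rfl⟩
    have : f x ∈ (I • (⊤ : Submodule A Y)).map f := Submodule.mem_map_of_mem hx
    rw [Submodule.map_smul''] at this
    refine Submodule.smul_le.mpr ?_ this
    intro c hc m _
    simpa [smul_eq_mul] using I.mul_mem_right m hc
  · intro hle
    obtain ⟨s, hs⟩ := Module.projective_def.mp (inferInstance : Module.Projective A Y)
    have hx : x = (s x).sum fun y a => a • y := by
      conv_lhs => rw [← hs x]
      rfl
    rw [hx]
    refine Submodule.sum_mem _ fun y hy => ?_
    refine Submodule.smul_mem_smul (hle ?_) trivial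
    exact Ideal.subset_span ⟨(Finsupp.lapply y).comp s, rfl⟩

/-- Conductor of an element: for a Dedekind domain `A`, a finitely generated projective
`A`-module `Y` and `0 ≠ x ∈ Y`, there is a unique minimal nonzero ideal `𝔠` with
`x ∈ 𝔠Y`, and it equals the intersection of all nonzero ideals `𝔫` with `x ∈ 𝔫Y`. -/
theorem exists_unique_conductor
    {A : Type*} [CommRing A] [IsDomain A] [IsDedekindDomain A]
    {Y : Type*} [AddCommGroup Y] [Module A Y] [Module.Finite A Y] [Module.Projective A Y]
    (x : Y) (hx : x ≠ 0) :
    ∃! 𝔠 : Ideal A,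
      𝔠 ≠ 0 ∧ x ∈ 𝔠 • (⊤ : Submodule A Y) ∧
        (∀ 𝔫 : Ideal A, 𝔫 ≠ 0 → x ∈ 𝔫 • (⊤ : Submodule A Y) → 𝔠 ≤ 𝔫) ∧
        𝔠 = sInf {𝔫 : Ideal A | 𝔫 ≠ 0 ∧ x ∈ 𝔫 • (⊤ : Submodule A Y)} := by
  set 𝔠 : Ideal A := Ideal.span {a | ∃ f : Y →ₗ[A] A, f x = a} with h𝔠
  have hmem : x ∈ 𝔠 • (⊤ : Submodule A Y) :=
    (mem_smul_top_iff_conductor x 𝔠).mpr le_rfl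
  have hne : 𝔠 ≠ 0 := by
    intro h0
    rw [h0] at hmem
    simp only [Submodule.zero_eq_bot, Submodule.bot_smul, Submodule.mem_bot] at hmem
    exact hx hmem
  have hmin : ∀ 𝔫 : Ideal A, x ∈ 𝔫 • (⊤ : Submodule A Y) → 𝔠 ≤ 𝔫 := fun 𝔫 h =>
    (mem_smul_top_iff_conductor x 𝔫).mp h
  have hsInf : 𝔠 = sInf {𝔫 : Ideal A | 𝔫 ≠ 0 ∧ x ∈ 𝔫 • (⊤ : Submodule A Y)} := by
    refine le_antisymm (le_sInf fun 𝔫 h𝔫 => hmin 𝔫 h𝔫.2) (sInf_le ⟨hne, hmem⟩)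
  refine ⟨𝔠, ⟨hne, hmem, fun 𝔫 _ h => hmin 𝔫 h, hsInf⟩, ?_⟩
  rintro 𝔡 ⟨-, -, -, h𝔡⟩
  rw [h𝔡, hsInf]
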